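/- If a CQ Q is both L1-connex and L2-connex for vertex sets L2 ⊆ L1, then there exists a join tree T of an inclusive extension of H(Q) with a subtree T1 containing exactly the vertices of L1 and a subtree T2 of T1 containing exactly the vertices of L2. -/

import Mathlib

/-- A hypergraph `E` is `S`-connex: there is a join tree of an inclusive
extension of `E` (all hyperedges of `E` appear as node labels, all node labels
are contained in hyperedges of `E`), satisfying the running intersection
property, with a connected subtree whose labels cover exactly `S`. -/
def SConnex {V : Type*} (E : Finset (Finset V)) (S : Finset V) : Prop :=
  ∃ (ι : Type) (T : SimpleGraph ι) (lab : ι → Finset V),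
    T.IsTree ∧ (∀ e ∈ E, ∃ i, lab i = e) ∧ (∀ i, ∃ e ∈ E, lab i ⊆ e) ∧
    (∀ v : V, (T.induce {i | v ∈ lab i}).Preconnected) ∧
    ∃ Sub : Set ι, (T.induce Sub).Preconnected ∧
      ∀ v : V, v ∈ S ↔ ∃ i ∈ Sub, v ∈ lab i

namespace NCAux

open SimpleGraph Walk

variable {α : Type*} {G : SimpleGraph α}

/-- A graph admitting a "parent" map strictly decreasing a measure along each
edge (one way or the other) is acyclic. -/
lemma acyclic_of_parent {β : Type*} [LinearOrder β] (par : α → α) (m : α → β)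
    (h : ∀ u v, G.Adj u v → (par u = v ∧ m v < m u) ∨ (par v = u ∧ m u < m v)) :
    G.IsAcyclic := by
  classical
  intro w c hc
  have hne : c.support.toFinset.Nonempty := ⟨w, by simp⟩
  obtain ⟨x, hx', hmaxF⟩ := c.support.toFinset.exists_max_image m hne
  rw [List.mem_toFinset] at hx'
  have hmax : ∀ y ∈ c.support, m y ≤ m x := fun y hy => hmaxF y (List.mem_toFinset.2 hy)
  have hcyc : (c.rotate x hx').IsCycle := hc.rotate hx'
  obtain ⟨y, hxy, p, hq⟩ := Walk.not_nil_iff.mp hcyc.not_nil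
  rw [hq] at hcyc
  have hxyne : x ≠ y := hxy.ne
  obtain ⟨z, hxz, q, hqr⟩ := Walk.exists_eq_cons_of_ne hxyne p.reverse
  have hmem : ∀ a, a ∈ p.support → a ∈ c.support := by
    intro a ha
    have h1 : a ∈ (c.rotate x hx').support.tail := by
      rw [hq, Walk.support_cons, List.tail_cons]; exact ha
    exact List.mem_of_mem_tail (((Walk.support_rotate c x hx').mem_iff).mp h1)
  have hy_mem : y ∈ p.support := p.start_mem_support
  have hz_mem : z ∈ p.support := by
    have : z ∈ p.reverse.support := by
      rw [hqr, Walk.support_cons]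
      exact List.mem_cons_of_mem _ q.start_mem_support
    rwa [Walk.support_reverse, List.mem_reverse] at this
  have hpath : p.IsPath := ((Walk.cons_isCycle_iff p hxy).mp hcyc).1
  have hyz : y ≠ z := by
    rintro rfl
    have hrev : p.reverse.IsPath := hpath.reverse
    rw [hqr] at hrev
    have hqnil : q = Walk.nil := by
      have := hrev.of_cons
      rwa [Walk.isPath_iff_eq_nil] at this
    have hlen : p.length = 1 := by
      have : p.reverse.length = 1 := by rw [hqr, hqnil]; simp
      rwa [Walk.length_reverse] at this
    have h3 := hcyc.three_le_length
    rw [Walk.length_cons, hlen] at h3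
    omega
  have h1 : par x = y := by
    rcases h x y hxy with ⟨h1, _⟩ | ⟨_, hlt⟩
    · exact h1
    · exact absurd hlt (not_lt.mpr (hmax y (hmem y hy_mem)))
  have h2 : par x = z := by
    rcases h x z hxz with ⟨h1, _⟩ | ⟨_, hlt⟩
    · exact h1
    · exact absurd hlt (not_lt.mpr (hmax z (hmem z hz_mem)))
  exact hyz (h1 ▸ h2)

/-- The unique path between two vertices of a tree. -/
noncomputable def tp (hT : G.IsTree) (u v : α) : G.Walk u v :=
  (hT.existsUnique_path u v).exists.choose

lemma tp_isPath (hT : G.IsTree) (u v : α) : (tp hT u v).IsPath :=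
  (hT.existsUnique_path u v).exists.choose_spec

lemma tp_eq (hT : G.IsTree) {u v : α} (p : G.Walk u v) (hp : p.IsPath) :
    p = tp hT u v :=
  (hT.existsUnique_path u v).unique hp (tp_isPath hT u v)

/-- Distance to the root `y0` in a tree. -/
noncomputable def td (hT : G.IsTree) (y0 u : α) : ℕ := (tp hT u y0).length

/-- The next vertex on the way from `u` to the root `y0` in a tree. -/
noncomputable def tpred (hT : G.IsTree) (y0 u : α) : α := (tp hT u y0).getVert 1

lemma step_aux (hT : G.IsTree) (y0 : α) {u v : α} (huv : G.Adj u v)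
    (hv : v ∉ (tp hT u y0).support) :
    tpred hT y0 v = u ∧ td hT y0 u < td hT y0 v := by
  have hp : (Walk.cons huv.symm (tp hT u y0)).IsPath := (tp_isPath hT u y0).cons hv
  have he := tp_eq hT _ hp
  refine ⟨?_, ?_⟩
  · rw [tpred, ← he, Walk.getVert_cons_succ, Walk.getVert_zero]
  · rw [td, td, ← he, Walk.length_cons]; omega

lemma tree_step (hT : G.IsTree) (y0 : α) {u v : α} (huv : G.Adj u v) :
    (tpred hT y0 u = v ∧ td hT y0 v < td hT y0 u) ∨
    (tpred hT y0 v = u ∧ td hT y0 u < td hT y0 v) := by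
  classical
  by_cases hv : v ∈ (tp hT u y0).support
  · left
    refine step_aux hT y0 huv.symm ?_
    -- u ∉ (tp v y0).support
    have hdrop : ((tp hT u y0).dropUntil v hv) = tp hT v y0 :=
      tp_eq hT _ ((tp_isPath hT u y0).dropUntil hv)
    intro hu
    rw [← hdrop] at hu
    have hne : u ≠ v := huv.ne
    have hu_tail : u ∈ ((tp hT u y0).dropUntil v hv).support.tail := by
      have hc := Walk.support_eq_cons ((tp hT u y0).dropUntil v hv)
      rw [hc] at hu
      rcases List.mem_cons.mp hu with h | h
      · exact absurd h hne
      · exact h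
    have hnd : ((tp hT u y0).support).Nodup := (tp_isPath hT u y0).support_nodup
    have hsplit : (tp hT u y0).support =
        ((tp hT u y0).takeUntil v hv).support ++
          ((tp hT u y0).dropUntil v hv).support.tail := by
      conv_lhs => rw [← (tp hT u y0).take_spec hv]
      rw [Walk.support_append]
    rw [hsplit] at hnd
    have hdisj := List.disjoint_of_nodup_append hnd
    exact hdisj ((tp hT u y0).takeUntil v hv).start_mem_support hu_tail
  · right
    exact step_aux hT y0 huv hv

lemma tpred_spec (hT : G.IsTree) (y0 : α) {u : α} (hu : u ≠ y0) :
    G.Adj u (tpred hT y0 u) ∧ td hT y0 (tpred hT y0 u) + 1 = td hT y0 u := by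
  obtain ⟨w, hadj, q, hq⟩ := Walk.exists_eq_cons_of_ne hu (tp hT u y0)
  have hw : tpred hT y0 u = w := by rw [tpred, hq, Walk.getVert_cons_succ, Walk.getVert_zero]
  have hqp : q.IsPath := by
    have := tp_isPath hT u y0
    rw [hq] at this
    exact this.of_cons
  have he : q = tp hT w y0 := tp_eq hT q hqp
  constructor
  · rw [hw]; exact hadj
  · rw [hw, td, td, ← he, hq, Walk.length_cons]

/-- If `x ∉ N`, `y ∈ N`, `x ~ y`, `N` is connected and the root `y0 ∈ N`,
then the next vertex from `x` towards `y0` is `y`. -/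
lemma tpred_eq_of_adj_set (hT : G.IsTree) {N : Set α} (hN : (G.induce N).Preconnected)
    {y0 : α} (hy0 : y0 ∈ N) {x y : α} (hx : x ∉ N) (hy : y ∈ N) (hxy : G.Adj x y) :
    tpred hT y0 x = y := by
  classical
  obtain ⟨w0⟩ := hN ⟨y, hy⟩ ⟨y0, hy0⟩
  let w1 := (w0.toPath : (G.induce N).Path ⟨y, hy⟩ ⟨y0, hy0⟩)
  let incl : G.induce N →g G := ⟨Subtype.val, fun h => h⟩
  have hmapPath : ((w1 : (G.induce N).Walk ⟨y, hy⟩ ⟨y0, hy0⟩).map incl).IsPath :=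
    Walk.map_isPath_of_injective Subtype.val_injective w1.2
  have hxnot : x ∉ ((w1 : (G.induce N).Walk ⟨y, hy⟩ ⟨y0, hy0⟩).map incl).support := by
    intro hmem
    rw [Walk.support_map, List.mem_map] at hmem
    obtain ⟨b, _, rfl⟩ := hmem
    exact hx b.2
  have hp : (Walk.cons hxy ((w1 : (G.induce N).Walk ⟨y, hy⟩ ⟨y0, hy0⟩).map incl)).IsPath :=
    hmapPath.cons hxnot
  have he : Walk.cons hxy ((w1 : (G.induce N).Walk ⟨y, hy⟩ ⟨y0, hy0⟩).map incl)
      = tp hT x y0 := tp_eq hT _ hp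
  rw [tpred, ← he, Walk.getVert_cons_succ, Walk.getVert_zero]

/-- The glued graph: the tree `T1` with the part `N1` replaced by the
whole tree `T2`, where each boundary vertex of `N1` is rerouted to `T2`
through `φ`. -/
def Glue {ι1 ι2 : Type} (T1 : SimpleGraph ι1) (T2 : SimpleGraph ι2)
    (N1 : Set ι1) (φ : ι1 → ι2) : SimpleGraph ({x : ι1 // x ∉ N1} ⊕ ι2) where
  Adj s t := match s, t with
    | Sum.inl x, Sum.inl x' => T1.Adj ↑x ↑x'
    | Sum.inl x, Sum.inr b => ∃ y ∈ N1, T1.Adj ↑x y ∧ φ y = b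
    | Sum.inr b, Sum.inl x => ∃ y ∈ N1, T1.Adj ↑x y ∧ φ y = b
    | Sum.inr b, Sum.inr b' => T2.Adj b b'
  symm := ⟨by
    rintro (x | b) (x' | b') h
    · exact h.symm
    · exact h
    · exact h
    · exact h.symm⟩
  loopless := ⟨by
    rintro (x | b) h
    · exact T1.loopless.irrefl _ h
    · exact T2.loopless.irrefl _ h⟩

section GlueLemmas

variable {ι1 ι2 : Type} {T1 : SimpleGraph ι1} {T2 : SimpleGraph ι2}
  {N1 : Set ι1} {φ : ι1 → ι2}

lemma glue_isTree (hT1 : T1.IsTree) (hT2 : T2.IsTree)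
    (hN1conn : (T1.induce N1).Preconnected) {y0 : ι1} (hy0 : y0 ∈ N1) :
    (Glue T1 T2 N1 φ).IsTree := by
  classical
  have hι2 : Nonempty ι2 := hT2.isConnected.nonempty
  obtain ⟨r⟩ := hι2
  set par : ({x : ι1 // x ∉ N1} ⊕ ι2) → ({x : ι1 // x ∉ N1} ⊕ ι2) := fun s =>
    match s with
    | Sum.inl x => if h : tpred hT1 y0 ↑x ∈ N1 then Sum.inr (φ (tpred hT1 y0 ↑x))
        else Sum.inl ⟨tpred hT1 y0 ↑x, h⟩
    | Sum.inr b => Sum.inr (tpred hT2 r b) with hpar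
  set m : ({x : ι1 // x ∉ N1} ⊕ ι2) → ℕ ×ₗ ℕ := fun s =>
    match s with
    | Sum.inl x => toLex (1, td hT1 y0 ↑x)
    | Sum.inr b => toLex (0, td hT2 r b) with hm
  have key : ∀ u v, (Glue T1 T2 N1 φ).Adj u v →
      (par u = v ∧ m v < m u) ∨ (par v = u ∧ m u < m v) := by
    rintro (x | b) (x' | b') h
    · rcases tree_step hT1 y0 h with ⟨hp, hd⟩ | ⟨hp, hd⟩
      · left
        constructor
        · show (if h : tpred hT1 y0 ↑x ∈ N1 then _ else _) = Sum.inl x'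
          rw [dif_neg (hp ▸ x'.2)]
          exact congrArg Sum.inl (Subtype.ext hp)
        · exact Prod.Lex.right _ hd
      · right
        constructor
        · show (if h : tpred hT1 y0 ↑x' ∈ N1 then _ else _) = Sum.inl x
          rw [dif_neg (hp ▸ x.2)]
          exact congrArg Sum.inl (Subtype.ext hp)
        · exact Prod.Lex.right _ hd
    · obtain ⟨y, hyN, hxy, rfl⟩ := h
      have hpx : tpred hT1 y0 ↑x = y := tpred_eq_of_adj_set hT1 hN1conn hy0 x.2 hyN hxy
      left
      constructor
      · show (if h : tpred hT1 y0 ↑x ∈ N1 then Sum.inr (φ (tpred hT1 y0 ↑x)) else _)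
          = Sum.inr (φ y)
        rw [dif_pos (hpx ▸ hyN), hpx]
      · exact Prod.Lex.left _ _ (by norm_num)
    · obtain ⟨y, hyN, hxy, rfl⟩ := h
      have hpx : tpred hT1 y0 ↑x' = y := tpred_eq_of_adj_set hT1 hN1conn hy0 x'.2 hyN hxy
      right
      constructor
      · show (if h : tpred hT1 y0 ↑x' ∈ N1 then Sum.inr (φ (tpred hT1 y0 ↑x')) else _)
          = Sum.inr (φ y)
        rw [dif_pos (hpx ▸ hyN), hpx]
      · exact Prod.Lex.left _ _ (by norm_num)
    · rcases tree_step hT2 r h with ⟨hp, hd⟩ | ⟨hp, hd⟩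
      · left
        exact ⟨congrArg Sum.inr hp, Prod.Lex.right _ hd⟩
      · right
        exact ⟨congrArg Sum.inr hp, Prod.Lex.right _ hd⟩
  have reach2 : ∀ (n : ℕ) (b : ι2), td hT2 r b = n →
      (Glue T1 T2 N1 φ).Reachable (Sum.inr b) (Sum.inr r) := by
    intro n
    induction n using Nat.strong_induction_on with
    | _ n ih =>
      intro b hb
      by_cases hbr : b = r
      · subst hbr; rfl
      · obtain ⟨hadj, hd⟩ := tpred_spec hT2 r hbr
        have hadj' : (Glue T1 T2 N1 φ).Adj (Sum.inr b) (Sum.inr (tpred hT2 r b)) := hadj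
        exact hadj'.reachable.trans (ih (td hT2 r (tpred hT2 r b)) (by omega) _ rfl)
  have reach1 : ∀ (n : ℕ) (x : {x : ι1 // x ∉ N1}), td hT1 y0 ↑x = n →
      (Glue T1 T2 N1 φ).Reachable (Sum.inl x) (Sum.inr r) := by
    intro n
    induction n using Nat.strong_induction_on with
    | _ n ih =>
      intro x hx
      have hxy0 : (↑x : ι1) ≠ y0 := fun hh => x.2 (hh ▸ hy0)
      obtain ⟨hadj, hd⟩ := tpred_spec hT1 y0 hxy0
      by_cases hp : tpred hT1 y0 ↑x ∈ N1
      · have hadj' : (Glue T1 T2 N1 φ).Adj (Sum.inl x) (Sum.inr (φ (tpred hT1 y0 ↑x))) :=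
          ⟨tpred hT1 y0 ↑x, hp, hadj, rfl⟩
        exact hadj'.reachable.trans (reach2 _ _ rfl)
      · have hadj' : (Glue T1 T2 N1 φ).Adj (Sum.inl x) (Sum.inl ⟨tpred hT1 y0 ↑x, hp⟩) := hadj
        exact hadj'.reachable.trans (ih (td hT1 y0 (tpred hT1 y0 ↑x)) (by omega) _ rfl)
  have hpre : (Glue T1 T2 N1 φ).Preconnected := by
    have hall : ∀ s, (Glue T1 T2 N1 φ).Reachable s (Sum.inr r) := by
      rintro (x | b)
      · exact reach1 _ x rfl
      · exact reach2 _ b rfl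
    intro s t
    exact (hall s).trans (hall t).symm
  exact ⟨(SimpleGraph.connected_iff (G := Glue T1 T2 N1 φ)).mpr ⟨hpre, ⟨Sum.inr r⟩⟩, acyclic_of_parent par m key⟩


theorem glue_case {V : Type*} (E : Finset (Finset V)) (L1 L2 : Finset V) (h21 : L2 ⊆ L1)
    {ι1 ι2 : Type} (T1 : SimpleGraph ι1) (T2 : SimpleGraph ι2)
    (lab1 : ι1 → Finset V) (lab2 : ι2 → Finset V)
    (hT1 : T1.IsTree) (hsurj1 : ∀ e ∈ E, ∃ i, lab1 i = e)
    (hsub1 : ∀ i, ∃ e ∈ E, lab1 i ⊆ e)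
    (hri1 : ∀ v : V, (T1.induce {i | v ∈ lab1 i}).Preconnected)
    {N1 : Set ι1} (hN1conn : (T1.induce N1).Preconnected)
    (hcov1 : ∀ v : V, v ∈ L1 ↔ ∃ i ∈ N1, v ∈ lab1 i)
    (hT2 : T2.IsTree) (hsurj2 : ∀ e ∈ E, ∃ i, lab2 i = e)
    (hsub2 : ∀ i, ∃ e ∈ E, lab2 i ⊆ e)
    (hri2 : ∀ v : V, (T2.induce {j | v ∈ lab2 j}).Preconnected)
    {N2 : Set ι2} (hN2conn : (T2.induce N2).Preconnected)
    (hcov2 : ∀ v : V, v ∈ L2 ↔ ∃ i ∈ N2, v ∈ lab2 i)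
    {y0 : ι1} (hy0 : y0 ∈ N1) :
    ∃ (ι : Type) (T : SimpleGraph ι) (lab : ι → Finset V),
      T.IsTree ∧ (∀ e ∈ E, ∃ i, lab i = e) ∧ (∀ i, ∃ e ∈ E, lab i ⊆ e) ∧
      (∀ v : V, (T.induce {i | v ∈ lab i}).Preconnected) ∧
      ∃ S1 S2 : Set ι, S2 ⊆ S1 ∧
        (T.induce S1).Preconnected ∧ (T.induce S2).Preconnected ∧
        (∀ v : V, v ∈ L1 ↔ ∃ i ∈ S1, v ∈ lab i) ∧
        (∀ v : V, v ∈ L2 ↔ ∃ i ∈ S2, v ∈ lab i) := by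
  classical
  have hι2 : Nonempty ι2 := hT2.isConnected.nonempty
  have hlabN1 : ∀ i ∈ N1, lab1 i ⊆ L1 := fun i hi v hv => (hcov1 v).mpr ⟨i, hi, hv⟩
  have hφex : ∀ i : ι1, ∃ j : ι2, i ∈ N1 → lab1 i ⊆ lab2 j := by
    intro i
    by_cases hi : i ∈ N1
    · obtain ⟨e, heE, hsube⟩ := hsub1 i
      obtain ⟨j, hj⟩ := hsurj2 e heE
      exact ⟨j, fun _ => by rw [hj]; exact hsube⟩
    · exact ⟨Classical.arbitrary ι2, fun h => absurd h hi⟩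
  choose φ hφ using hφex
  refine ⟨({x : ι1 // x ∉ N1} ⊕ ι2), Glue T1 T2 N1 φ,
    Sum.elim (fun x => lab1 ↑x) (fun b => lab2 b ∩ L1),
    glue_isTree hT1 hT2 hN1conn hy0, ?_, ?_, ?_, ?_⟩
  · -- every hyperedge appears
    intro e heE
    by_cases he : e ⊆ L1
    · obtain ⟨j, hj⟩ := hsurj2 e heE
      refine ⟨Sum.inr j, ?_⟩
      show lab2 j ∩ L1 = e
      rw [hj, Finset.inter_eq_left.mpr he]
    · obtain ⟨i, hi⟩ := hsurj1 e heE
      have hiN : i ∉ N1 := fun hmem => he (hi ▸ hlabN1 i hmem)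
      exact ⟨Sum.inl ⟨i, hiN⟩, hi⟩
  · -- every label is inside a hyperedge
    rintro (x | b)
    · exact hsub1 ↑x
    · obtain ⟨e, heE, hsube⟩ := hsub2 b
      exact ⟨e, heE, (Finset.inter_subset_left).trans hsube⟩
  · -- running intersection
    intro v
    by_cases hvL1 : v ∈ L1
    · obtain ⟨i0, hi0N, hvi0⟩ := (hcov1 v).mp hvL1
      have hom2 : ∀ (b b' : ι2) (hb : v ∈ lab2 b) (hb' : v ∈ lab2 b'),
          ((Glue T1 T2 N1 φ).induce
            {s | v ∈ Sum.elim (fun x : {x : ι1 // x ∉ N1} => lab1 ↑x)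
              (fun b => lab2 b ∩ L1) s}).Reachable
            ⟨Sum.inr b, Finset.mem_inter.mpr ⟨hb, hvL1⟩⟩
            ⟨Sum.inr b', Finset.mem_inter.mpr ⟨hb', hvL1⟩⟩ := by
        intro b b' hb hb'
        have hreach := hri2 v ⟨b, hb⟩ ⟨b', hb'⟩
        let f : (T2.induce {j | v ∈ lab2 j}) →g
            ((Glue T1 T2 N1 φ).induce
              {s | v ∈ Sum.elim (fun x : {x : ι1 // x ∉ N1} => lab1 ↑x)
                (fun b => lab2 b ∩ L1) s}) :=
          ⟨fun j => ⟨Sum.inr ↑j, Finset.mem_inter.mpr ⟨j.2, hvL1⟩⟩, fun h => h⟩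
        exact hreach.map f
      have walkrec : ∀ (t : {i : ι1 // i ∈ {i | v ∈ lab1 i}})
          (a : {i : ι1 // i ∈ {i | v ∈ lab1 i}})
          (w : (T1.induce {i | v ∈ lab1 i}).Walk a t), ↑t ∈ N1 → ∀ ha : ↑a ∉ N1,
          ∃ b : ι2, ∃ hb : v ∈ lab2 b,
            ((Glue T1 T2 N1 φ).induce
              {s | v ∈ Sum.elim (fun x : {x : ι1 // x ∉ N1} => lab1 ↑x)
                (fun b => lab2 b ∩ L1) s}).Reachable
              ⟨Sum.inl ⟨↑a, ha⟩, a.2⟩ ⟨Sum.inr b, Finset.mem_inter.mpr ⟨hb, hvL1⟩⟩ := by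
        intro t a w
        induction w with
        | nil => exact fun ht ha => absurd ht ha
        | @cons a a1 t hadj w' ih =>
          intro ht ha
          by_cases h1 : ↑a1 ∈ N1
          · refine ⟨φ ↑a1, hφ ↑a1 h1 a1.2, ?_⟩
            exact SimpleGraph.Adj.reachable ⟨↑a1, h1, hadj, rfl⟩
          · obtain ⟨b, hb, hr⟩ := ih ht h1
            have hadj' : ((Glue T1 T2 N1 φ).induce
                {s | v ∈ Sum.elim (fun x : {x : ι1 // x ∉ N1} => lab1 ↑x)
                  (fun b => lab2 b ∩ L1) s}).Adj
                ⟨Sum.inl ⟨↑a, ha⟩, a.2⟩ ⟨Sum.inl ⟨↑a1, h1⟩, a1.2⟩ := hadj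
            exact ⟨b, hb, hadj'.reachable.trans hr⟩
      have hnode : ∀ (s : {x : ι1 // x ∉ N1} ⊕ ι2)
          (hs : v ∈ Sum.elim (fun x : {x : ι1 // x ∉ N1} => lab1 ↑x)
            (fun b => lab2 b ∩ L1) s),
          ∃ b : ι2, ∃ hb : v ∈ lab2 b,
            ((Glue T1 T2 N1 φ).induce
              {s | v ∈ Sum.elim (fun x : {x : ι1 // x ∉ N1} => lab1 ↑x)
                (fun b => lab2 b ∩ L1) s}).Reachable
              ⟨s, hs⟩ ⟨Sum.inr b, Finset.mem_inter.mpr ⟨hb, hvL1⟩⟩ := by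
        rintro (x | b) hs
        · obtain ⟨w⟩ := hri1 v ⟨↑x, hs⟩ ⟨i0, hvi0⟩
          obtain ⟨b, hb, hr⟩ := walkrec ⟨i0, hvi0⟩ ⟨↑x, hs⟩ w hi0N x.2
          exact ⟨b, hb, hr⟩
        · exact ⟨b, (Finset.mem_inter.mp hs).1, SimpleGraph.Reachable.refl _⟩
      rintro ⟨s, hs⟩ ⟨t, ht⟩
      obtain ⟨b, hb, hrb⟩ := hnode s hs
      obtain ⟨b', hb', hrb'⟩ := hnode t ht
      exact (hrb.trans (hom2 b b' hb hb')).trans hrb'.symm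
    · have hnot : ∀ i ∈ N1, v ∉ lab1 i := fun i hi hv => hvL1 ((hcov1 v).mpr ⟨i, hi, hv⟩)
      rintro ⟨s, hs⟩ ⟨t, ht⟩
      cases s with
      | inr b => exact absurd (Finset.mem_inter.mp hs).2 hvL1
      | inl x =>
        cases t with
        | inr b => exact absurd (Finset.mem_inter.mp ht).2 hvL1
        | inl x' =>
          have hreach := hri1 v ⟨↑x, hs⟩ ⟨↑x', ht⟩
          let f : (T1.induce {i | v ∈ lab1 i}) →g
              ((Glue T1 T2 N1 φ).induce
                {s | v ∈ Sum.elim (fun x : {x : ι1 // x ∉ N1} => lab1 ↑x)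
                  (fun b => lab2 b ∩ L1) s}) :=
            ⟨fun i => ⟨Sum.inl ⟨↑i, fun hN => hnot ↑i hN i.2⟩, i.2⟩, fun h => h⟩
          exact hreach.map f
  · -- the two nested subtrees
    refine ⟨Set.range Sum.inr, Sum.inr '' N2, ?_, ?_, ?_, ?_, ?_⟩
    · rintro _ ⟨b, _, rfl⟩; exact ⟨b, rfl⟩
    · rintro ⟨s, hs⟩ ⟨t, ht⟩
      obtain ⟨b, rfl⟩ := hs
      obtain ⟨b', rfl⟩ := ht
      have hreach := hT2.isConnected.preconnected b b'
      let f : T2 →g ((Glue T1 T2 N1 φ).induce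
          (Set.range (Sum.inr : ι2 → {x : ι1 // x ∉ N1} ⊕ ι2))) :=
        ⟨fun j => ⟨Sum.inr j, ⟨j, rfl⟩⟩, fun h => h⟩
      exact hreach.map f
    · rintro ⟨s, hs⟩ ⟨t, ht⟩
      obtain ⟨b, hbN, rfl⟩ := hs
      obtain ⟨b', hbN', rfl⟩ := ht
      have hreach := hN2conn ⟨b, hbN⟩ ⟨b', hbN'⟩
      let f : (T2.induce N2) →g ((Glue T1 T2 N1 φ).induce
          ((Sum.inr : ι2 → {x : ι1 // x ∉ N1} ⊕ ι2) '' N2)) :=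
        ⟨fun j => ⟨Sum.inr ↑j, ⟨↑j, j.2, rfl⟩⟩, fun h => h⟩
      exact hreach.map f
    · intro v
      constructor
      · intro hv
        obtain ⟨i, hiN, hvi⟩ := (hcov1 v).mp hv
        obtain ⟨e, heE, hsube⟩ := hsub1 i
        obtain ⟨j, hj⟩ := hsurj2 e heE
        refine ⟨Sum.inr j, ⟨j, rfl⟩, ?_⟩
        exact Finset.mem_inter.mpr ⟨by rw [hj]; exact hsube hvi, hv⟩
      · rintro ⟨s, ⟨b, rfl⟩, hv⟩
        exact (Finset.mem_inter.mp hv).2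
    · intro v
      constructor
      · intro hv
        obtain ⟨j, hjN, hvj⟩ := (hcov2 v).mp hv
        exact ⟨Sum.inr j, ⟨j, hjN, rfl⟩, Finset.mem_inter.mpr ⟨hvj, h21 hv⟩⟩
      · rintro ⟨s, ⟨b, hbN, rfl⟩, hv⟩
        exact (hcov2 v).mpr ⟨b, hbN, (Finset.mem_inter.mp hv).1⟩


end GlueLemmas

end NCAux

/-- If a CQ is both `L1`-connex and `L2`-connex with
`L2 ⊆ L1`, then there is a join tree `T` of an inclusive extension of its
hypergraph with a subtree `T1` containing exactly the vertices `L1` and a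
subtree `T2` of `T1` containing exactly the vertices `L2`. -/
theorem nested_connex_trees {V : Type*}
    (E : Finset (Finset V)) (L1 L2 : Finset V) (h21 : L2 ⊆ L1)
    (h1 : SConnex E L1) (h2 : SConnex E L2) :
    ∃ (ι : Type) (T : SimpleGraph ι) (lab : ι → Finset V),
      T.IsTree ∧ (∀ e ∈ E, ∃ i, lab i = e) ∧ (∀ i, ∃ e ∈ E, lab i ⊆ e) ∧
      (∀ v : V, (T.induce {i | v ∈ lab i}).Preconnected) ∧
      ∃ S1 S2 : Set ι, S2 ⊆ S1 ∧
        (T.induce S1).Preconnected ∧ (T.induce S2).Preconnected ∧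
        (∀ v : V, v ∈ L1 ↔ ∃ i ∈ S1, v ∈ lab i) ∧
        (∀ v : V, v ∈ L2 ↔ ∃ i ∈ S2, v ∈ lab i) := by
  classical
  obtain ⟨ι1, T1, lab1, hT1, hsurj1, hsub1, hri1, N1, hN1conn, hcov1⟩ := h1
  obtain ⟨ι2, T2, lab2, hT2, hsurj2, hsub2, hri2, N2, hN2conn, hcov2⟩ := h2
  rcases L1.eq_empty_or_nonempty with hL1e | ⟨v0, hv0⟩
  · have hL2e : L2 = ∅ := Finset.subset_empty.mp (hL1e ▸ h21)
    refine ⟨ι1, T1, lab1, hT1, hsurj1, hsub1, hri1, ∅, ∅, subset_rfl, ?_, ?_, ?_, ?_⟩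
    · rintro ⟨a, ha⟩; exact absurd ha (Set.notMem_empty a)
    · rintro ⟨a, ha⟩; exact absurd ha (Set.notMem_empty a)
    · intro v; simp [hL1e]
    · intro v; simp [hL2e]
  · obtain ⟨y0, hy0, -⟩ := (hcov1 v0).mp hv0
    exact NCAux.glue_case E L1 L2 h21 T1 T2 lab1 lab2 hT1 hsurj1 hsub1 hri1 hN1conn hcov1
      hT2 hsurj2 hsub2 hri2 hN2conn hcov2 hy0
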